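/- Let d ∈ ℤ be nonzero, let f ∈ ℤ[X] have degree m ≥ 1 with positive leading coefficient, let n ≥ 1, and let P, Q ∈ ℚ[X] with deg P = n·m, deg Q = (n−1)·m, both with positive leading coefficients, satisfying P^2 − (f^2 + d)·Q^2 = (−d)^n. Define P' = −(f/d)·P + ((f^2 + d)/d)·Q and Q' = (1/d)·P − (f/d)·Q in ℚ[X]. Then deg P' < deg P and deg Q' < deg Q. -/

import Mathlib

open Polynomial

/-- Descent step, part 2 (Lemma 2, item 2): under the degree and positivity hypotheses, the
polynomials `P' = −(f/d)·P + ((f² + d)/d)·Q` and `Q' = (1/d)·P − (f/d)·Q` have strictly smaller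
degrees than `P` and `Q`, respectively. -/
theorem pell_descent_deg (d : ℤ) (hd : d ≠ 0) (f : Polynomial ℤ) (m : ℕ)
    (hm : f.natDegree = m) (hm0 : 1 ≤ m) (hf : 0 < f.leadingCoeff)
    (n : ℕ) (hn : 1 ≤ n) (F P Q P' Q' : Polynomial ℚ)
    (hF : F = f.map (Int.castRingHom ℚ))
    (hdegP : P.degree = (n * m : ℕ)) (hdegQ : Q.degree = ((n - 1) * m : ℕ))
    (hlcP : 0 < P.leadingCoeff) (hlcQ : 0 < Q.leadingCoeff)
    (hPell : P ^ 2 - (F ^ 2 + C (d : ℚ)) * Q ^ 2 = C ((-(d : ℚ)) ^ n))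
    (hP' : P' = -(C ((d : ℚ)⁻¹) * F * P) + C ((d : ℚ)⁻¹) * (F ^ 2 + C (d : ℚ)) * Q)
    (hQ' : Q' = C ((d : ℚ)⁻¹) * P - C ((d : ℚ)⁻¹) * F * Q) :
    P'.degree < P.degree ∧ Q'.degree < Q.degree := by
  have hd' : (d : ℚ) ≠ 0 := Int.cast_ne_zero.mpr hd
  have hf0 : f ≠ 0 := leadingCoeff_ne_zero.mp (ne_of_gt hf)
  have hinj : Function.Injective (Int.castRingHom ℚ) := Int.cast_injective
  have hFdeg : F.degree = (m : ℕ) := by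
    rw [hF, degree_map_eq_of_injective hinj, degree_eq_natDegree hf0, hm]
  have hFlc : 0 < F.leadingCoeff := by
    rw [hF, leadingCoeff_map_of_injective hinj, eq_intCast]
    exact_mod_cast hf
  -- key arithmetic facts
  have hkey : (n - 1) * m + m = n * m := by
    have h1 : (n - 1) * m = n * m - m := by rw [Nat.sub_mul, one_mul]
    have h2 : m ≤ n * m := Nat.le_mul_of_pos_left m (by omega)
    omega
  -- R := P - F * Q
  set R : Polynomial ℚ := P - F * Q with hRdef
  have hRProd : R * (P + F * Q) = C ((-(d : ℚ)) ^ n) + C (d : ℚ) * Q ^ 2 := by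
    rw [hRdef]
    linear_combination hPell
  have hFQdeg : (F * Q).degree = ((n * m : ℕ) : WithBot ℕ) := by
    rw [degree_mul, hFdeg, hdegQ, ← Nat.cast_add]
    congr 1
    omega
  have hsum : (P + F * Q).degree = ((n * m : ℕ) : WithBot ℕ) := by
    apply le_antisymm
    · refine le_trans (degree_add_le _ _) ?_
      rw [hdegP, hFQdeg]
      simp
    · apply le_degree_of_ne_zero
      rw [coeff_add]
      have h1 : P.coeff (n * m) = P.leadingCoeff := by
        rw [leadingCoeff, natDegree_eq_of_degree_eq_some hdegP]
      have h2 : (F * Q).coeff (n * m) = F.leadingCoeff * Q.leadingCoeff := by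
        rw [← leadingCoeff_mul, leadingCoeff, natDegree_eq_of_degree_eq_some hFQdeg]
      rw [h1, h2]
      exact ne_of_gt (add_pos hlcP (mul_pos hFlc hlcQ))
  have hmul : R.degree + ((n * m : ℕ) : WithBot ℕ) ≤ ((2 * ((n - 1) * m) : ℕ) : WithBot ℕ) := by
    rw [← hsum, ← degree_mul, hRProd]
    refine le_trans (degree_add_le _ _) (max_le ?_ ?_)
    · exact le_trans degree_C_le (by exact_mod_cast Nat.zero_le _)
    · rw [degree_mul, degree_C hd', degree_pow, hdegQ, zero_add]
      rw [show ((2 * ((n - 1) * m) : ℕ) : WithBot ℕ) = 2 • (((n - 1) * m : ℕ) : WithBot ℕ) by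
        rw [two_mul, two_nsmul, ← Nat.cast_add]]
  -- algebraic identities for P' and Q'
  have hCdd : C ((d : ℚ)⁻¹) * C (d : ℚ) = 1 := by
    rw [← C_mul, inv_mul_cancel₀ hd', C_1]
  have hP'eq : P' = Q - C ((d : ℚ)⁻¹) * F * R := by
    rw [hP', hRdef]
    linear_combination Q * hCdd
  have hQ'eq : Q' = C ((d : ℚ)⁻¹) * R := by
    rw [hQ', hRdef]; ring
  have hlt : (n - 1) * m < n * m := by omega
  rw [hP'eq, hQ'eq, hdegP, hdegQ]
  by_cases hR0 : R = 0
  · rw [hR0]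
    constructor
    · rw [mul_zero, sub_zero, hdegQ]
      exact_mod_cast hlt
    · rw [mul_zero, degree_zero]
      exact_mod_cast WithBot.bot_lt_coe ((n - 1) * m)
  · have hRk : R.degree = (R.natDegree : ℕ) := degree_eq_natDegree hR0
    have hknat : R.natDegree + n * m ≤ 2 * ((n - 1) * m) := by
      rw [hRk, ← Nat.cast_add] at hmul
      exact_mod_cast hmul
    have hklt : R.natDegree < (n - 1) * m := by omega
    constructor
    · refine lt_of_le_of_lt (degree_sub_le _ _) (max_lt ?_ ?_)
      · rw [hdegQ]
        exact_mod_cast hlt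
      · rw [degree_mul, degree_mul, degree_C (inv_ne_zero hd'), hFdeg, hRk, zero_add,
          ← Nat.cast_add]
        exact_mod_cast by omega
    · rw [degree_mul, degree_C (inv_ne_zero hd'), hRk, zero_add]
      exact_mod_cast hklt
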